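/- arXiv:2507.00910 — 5 statements merged into one kernel-verified Lean document; each statement's English description precedes it below -/
import Mathlib

section
/- For every p ≥ 1 there exists a constant C = C(p) > 0 such that for every x = (x₁, x₂) ∈ ℝ²₊ and every α > 0, one has ∫_{{y ∈ ℝ²₊ : |x − y| < α}} G(x, y)^p dy ≤ C · x₂ · α, where G(x, y) = (1/(4π)) log(1 + 4x₂y₂/|x − y|²). -/
open MeasureTheory Real Set

noncomputable def G (x y : ℝ × ℝ) : ℝ :=
  (1 / (4 * π)) * Real.log (1 + 4 * x.2 * y.2 / ((x.1 - y.1)^2 + (x.2 - y.2)^2))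

-- (x+y)^p ≥ x^p + y^p for p ≥ 1, x y ≥ 0 (real version)
lemma my_add_rpow_le_rpow_add {p a b : ℝ} (ha : 0 ≤ a) (hb : 0 ≤ b) (hp : 1 ≤ p) :
    a ^ p + b ^ p ≤ (a + b) ^ p := by
  have h := NNReal.add_rpow_le_rpow_add a.toNNReal b.toNNReal hp
  have h2 : ((a.toNNReal ^ p + b.toNNReal ^ p : NNReal) : ℝ)
      ≤ (((a.toNNReal + b.toNNReal) ^ p : NNReal) : ℝ) := by exact_mod_cast h
  rwa [NNReal.coe_add, NNReal.coe_rpow, NNReal.coe_rpow, NNReal.coe_rpow, NNReal.coe_add,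
    Real.coe_toNNReal a ha, Real.coe_toNNReal b hb] at h2

lemma my_log_le {p s : ℝ} (hp : 1 ≤ p) (hs : 0 ≤ s) :
    Real.log (1 + s) ≤ p * s ^ (1 / p) := by
  have hp0 : 0 < p := lt_of_lt_of_le one_pos hp
  set a := s ^ (1 / p) with ha
  have ha0 : 0 ≤ a := Real.rpow_nonneg hs _
  have hap : a ^ p = s := by
    rw [ha, ← Real.rpow_mul hs, one_div, inv_mul_cancel₀ hp0.ne', Real.rpow_one]
  have h1 : 1 + s ≤ (1 + a) ^ p := by
    calc 1 + s = 1 ^ p + a ^ p := by rw [hap, Real.one_rpow]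
      _ ≤ (1 + a) ^ p := my_add_rpow_le_rpow_add zero_le_one ha0 hp
  have h2 : Real.log (1 + s) ≤ Real.log ((1 + a) ^ p) :=
    Real.log_le_log (by linarith) h1
  rw [Real.log_rpow (by linarith)] at h2
  have h3 : Real.log (1 + a) ≤ a := by
    have := Real.log_le_sub_one_of_pos (show (0:ℝ) < 1 + a by linarith)
    linarith
  calc Real.log (1 + s) ≤ p * Real.log (1 + a) := h2
    _ ≤ p * a := by nlinarith

lemma my_pointwise_bound {p : ℝ} (hp : 1 ≤ p) (x y : ℝ × ℝ) (hx : 0 < x.2) (hy : 0 < y.2) :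
    G x y ^ p ≤ (2 * (p / (2 * π)) ^ p) * x.2 *
      (Real.sqrt ((x.1 - y.1)^2 + (x.2 - y.2)^2))⁻¹ := by
  have hπ := Real.pi_pos
  have hp0 : 0 < p := lt_of_lt_of_le one_pos hp
  unfold G
  set r2 := (x.1 - y.1)^2 + (x.2 - y.2)^2 with hr2
  have hr2nn : 0 ≤ r2 := by positivity
  rcases eq_or_lt_of_le hr2nn with h0 | h0
  · have hs0 : Real.sqrt r2 = 0 := by rw [← h0, Real.sqrt_zero]
    rw [← h0]
    simp [Real.zero_rpow hp0.ne', hs0]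
  · set r := Real.sqrt r2 with hr
    have hrpos : 0 < r := Real.sqrt_pos.mpr h0
    have hrsq : r ^ 2 = r2 := Real.sq_sqrt hr2nn
    have hy2 : y.2 ≤ x.2 + r := by
      have h1 : |x.2 - y.2| ≤ r := by
        rw [hr, ← Real.sqrt_sq_eq_abs]
        exact Real.sqrt_le_sqrt (by nlinarith [sq_nonneg (x.1 - y.1)])
      have := abs_le.mp h1
      linarith [this.1]
    set s := 2 * x.2 / r with hs
    have hs0 : 0 ≤ s := by positivity
    have hsr : s * r = 2 * x.2 := by
      rw [hs]; field_simp
    have ht0 : (0:ℝ) ≤ 4 * x.2 * y.2 / r2 := by positivity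
    have ht : 4 * x.2 * y.2 / r2 ≤ (1 + s)^2 - 1 := by
      rw [div_le_iff₀ h0]
      have key : ((1 + s)^2 - 1) * r2 = (s * r) * (s * r) + 2 * (s * r) * r := by
        rw [← hrsq]; ring
      rw [key, hsr]
      nlinarith [mul_le_mul_of_nonneg_left hy2 (by positivity : (0:ℝ) ≤ 4 * x.2)]
    have hGnn : 0 ≤ 1 / (4 * π) * Real.log (1 + 4 * x.2 * y.2 / r2) := by
      apply mul_nonneg (by positivity)
      exact Real.log_nonneg (by linarith)
    have hGle : 1 / (4 * π) * Real.log (1 + 4 * x.2 * y.2 / r2) ≤ (p / (2 * π)) * s ^ (1/p) := by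
      have hlog1 : Real.log (1 + 4 * x.2 * y.2 / r2) ≤ 2 * Real.log (1 + s) := by
        calc Real.log (1 + 4 * x.2 * y.2 / r2) ≤ Real.log ((1 + s)^2) :=
              Real.log_le_log (by linarith) (by linarith)
          _ = 2 * Real.log (1 + s) := by
              rw [Real.log_pow]; push_cast; ring
      have hlog2 : Real.log (1 + s) ≤ p * s ^ (1/p) := my_log_le hp hs0
      have : Real.log (1 + 4 * x.2 * y.2 / r2) ≤ 2 * (p * s ^ (1/p)) := by linarith
      calc 1 / (4 * π) * Real.log (1 + 4 * x.2 * y.2 / r2)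
          ≤ 1 / (4 * π) * (2 * (p * s ^ (1/p))) :=
            mul_le_mul_of_nonneg_left this (by positivity)
        _ = (p / (2 * π)) * s ^ (1/p) := by ring
    calc (1 / (4 * π) * Real.log (1 + 4 * x.2 * y.2 / r2)) ^ p
        ≤ ((p / (2 * π)) * s ^ (1/p)) ^ p := Real.rpow_le_rpow hGnn hGle hp0.le
      _ = (p / (2 * π)) ^ p * (s ^ (1/p)) ^ p := by
          rw [Real.mul_rpow (by positivity) (Real.rpow_nonneg hs0 _)]
      _ = (p / (2 * π)) ^ p * s := by
          rw [← Real.rpow_mul hs0, one_div, inv_mul_cancel₀ hp0.ne', Real.rpow_one]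
      _ = (2 * (p / (2 * π)) ^ p) * x.2 * r⁻¹ := by
          rw [hs, div_eq_mul_inv]; ring

lemma my_key_integral {α : ℝ} (hα : 0 < α) :
    Integrable (({z : ℝ × ℝ | z.1^2 + z.2^2 < α^2}).indicator
      fun z => (Real.sqrt (z.1^2 + z.2^2))⁻¹) ∧
    (∫ z, ({z : ℝ × ℝ | z.1^2 + z.2^2 < α^2}).indicator
      (fun z => (Real.sqrt (z.1^2 + z.2^2))⁻¹) z) = 2 * π * α := by
  have hπ := Real.pi_pos
  set g : ℝ × ℝ → ℝ := ({z : ℝ × ℝ | z.1^2 + z.2^2 < α^2}).indicator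
      (fun z => (Real.sqrt (z.1^2 + z.2^2))⁻¹) with hg
  set T : Set (ℝ × ℝ) := Ioo (0:ℝ) α ×ˢ Ioo (-π) π with hT
  have hTsub : T ⊆ polarCoord.target := by
    rintro ⟨ρ, θ⟩ ⟨h1, h2⟩
    exact ⟨h1.1, h2⟩
  have key : ∀ q ∈ polarCoord.target, q.1 • g (polarCoord.symm q)
      = T.indicator (fun _ => (1:ℝ)) q := by
    rintro ⟨ρ, θ⟩ hq
    have hρ : 0 < ρ := hq.1
    have hsymm : polarCoord.symm (ρ, θ) = (ρ * cos θ, ρ * sin θ) := rfl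
    have hsq : (ρ * cos θ)^2 + (ρ * sin θ)^2 = ρ^2 := by
      have := sin_sq_add_cos_sq θ; nlinarith
    by_cases hρα : ρ < α
    · have hmemT : (ρ, θ) ∈ T := ⟨⟨hρ, hρα⟩, hq.2⟩
      have hmem : polarCoord.symm (ρ, θ) ∈ {z : ℝ × ℝ | z.1^2 + z.2^2 < α^2} := by
        rw [hsymm]
        show (ρ * cos θ)^2 + (ρ * sin θ)^2 < α^2
        rw [hsq]
        exact pow_lt_pow_left₀ hρα hρ.le two_ne_zero
      rw [hg, indicator_of_mem hmem, indicator_of_mem hmemT]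
      rw [hsymm]
      show ρ • (Real.sqrt ((ρ * cos θ)^2 + (ρ * sin θ)^2))⁻¹ = 1
      rw [hsq, Real.sqrt_sq hρ.le, smul_eq_mul, mul_inv_cancel₀ hρ.ne']
    · have hnotT : (ρ, θ) ∉ T := fun h => hρα h.1.2
      have hnot : polarCoord.symm (ρ, θ) ∉ {z : ℝ × ℝ | z.1^2 + z.2^2 < α^2} := by
        rw [hsymm]
        show ¬ ((ρ * cos θ)^2 + (ρ * sin θ)^2 < α^2)
        rw [hsq, not_lt]
        exact pow_le_pow_left₀ hα.le (not_lt.1 hρα) 2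
      rw [hg, indicator_of_notMem hnot, indicator_of_notMem hnotT, smul_zero]
  have hTmeas : MeasurableSet T := measurableSet_Ioo.prod measurableSet_Ioo
  have hTvol : volume T = ENNReal.ofReal α * ENNReal.ofReal (2 * π) := by
    rw [hT, Measure.volume_eq_prod, Measure.prod_prod, Real.volume_Ioo, Real.volume_Ioo]
    congr 2 <;> ring
  have hind_int : IntegrableOn (T.indicator (fun _ => (1:ℝ))) polarCoord.target := by
    apply Integrable.integrableOn
    rw [integrable_indicator_iff hTmeas]
    refine (integrableOn_const_iff (C := (1:ℝ))).mpr (Or.inr ?_)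
    rw [hTvol]
    exact ENNReal.mul_lt_top ENNReal.ofReal_lt_top ENNReal.ofReal_lt_top
  have B_det : ∀ q : ℝ × ℝ,
      (LinearMap.toContinuousLinearMap (Matrix.toLin (Module.Basis.finTwoProd ℝ) (Module.Basis.finTwoProd ℝ)
        !![cos q.2, -q.1 * sin q.2; sin q.2, q.1 * cos q.2])).det = q.1 := by
    intro q
    conv_rhs => rw [← one_mul q.1, ← cos_sq_add_sin_sq q.2]
    simp only [neg_mul, LinearMap.det_toContinuousLinearMap, LinearMap.det_toLin,
      Matrix.det_fin_two_of, sub_neg_eq_add]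
    ring
  constructor
  · have h1 : Integrable g ↔ IntegrableOn g polarCoord.source := by
      rw [IntegrableOn, Measure.restrict_congr_set polarCoord_source_ae_eq_univ,
        Measure.restrict_univ]
    rw [h1, ← polarCoord.symm_image_target_eq_source]
    have hder : ∀ q ∈ polarCoord.target, HasFDerivWithinAt polarCoord.symm
        (LinearMap.toContinuousLinearMap (Matrix.toLin (Module.Basis.finTwoProd ℝ) (Module.Basis.finTwoProd ℝ)
          !![cos q.2, -q.1 * sin q.2; sin q.2, q.1 * cos q.2])) polarCoord.target q :=
      fun q _ => (hasFDerivAt_polarCoord_symm q).hasFDerivWithinAt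
    have hinj : InjOn polarCoord.symm polarCoord.target := polarCoord.symm.injOn
    rw [integrableOn_image_iff_integrableOn_abs_det_fderiv_smul volume
      polarCoord.open_target.measurableSet hder hinj g]
    refine hind_int.congr_fun (fun q hq => ?_) polarCoord.open_target.measurableSet
    rw [← key q hq, B_det q, abs_of_pos hq.1]
  · rw [← integral_comp_polarCoord_symm g]
    rw [setIntegral_congr_fun polarCoord.open_target.measurableSet key]
    rw [setIntegral_indicator hTmeas, inter_eq_self_of_subset_right hTsub,
      setIntegral_const, measureReal_def, hTvol]
    rw [ENNReal.toReal_mul, ENNReal.toReal_ofReal hα.le,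
      ENNReal.toReal_ofReal (by positivity : (0:ℝ) ≤ 2 * π)]
    simp; ring

theorem greens_function_ball_bound (p : ℝ) (hp : 1 ≤ p) :
    ∃ C : ℝ, 0 < C ∧ ∀ x : ℝ × ℝ, 0 < x.2 → ∀ α : ℝ, 0 < α →
      (∫ y in {y : ℝ × ℝ | 0 < y.2 ∧ (x.1 - y.1)^2 + (x.2 - y.2)^2 < α^2}, (G x y) ^ p)
        ≤ C * x.2 * α := by
  have hπ := Real.pi_pos
  have hp0 : 0 < p := lt_of_lt_of_le one_pos hp
  set K : ℝ := 2 * (p / (2 * π)) ^ p with hK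
  have hK0 : 0 < K := by positivity
  refine ⟨2 * π * K + 1, by positivity, ?_⟩
  intro x hx α hα
  set S := {y : ℝ × ℝ | 0 < y.2 ∧ (x.1 - y.1)^2 + (x.2 - y.2)^2 < α^2} with hS
  obtain ⟨hint, hval⟩ := my_key_integral hα
  set g : ℝ × ℝ → ℝ := ({z : ℝ × ℝ | z.1^2 + z.2^2 < α^2}).indicator
      (fun z => (Real.sqrt (z.1^2 + z.2^2))⁻¹) with hg
  set m : ℝ × ℝ → ℝ := fun y => K * x.2 * g (y - x) with hm
  have hg_nonneg : ∀ z, 0 ≤ g z :=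
    fun z => indicator_nonneg (fun w _ => inv_nonneg.mpr (Real.sqrt_nonneg _)) z
  have hm_int : Integrable m := (hint.comp_sub_right x).const_mul _
  have hm_nonneg : ∀ y, 0 ≤ m y := fun y => mul_nonneg (by positivity) (hg_nonneg _)
  have hm_val : ∫ y, m y = K * x.2 * (2 * π * α) := by
    rw [hm]
    rw [integral_const_mul]
    rw [integral_sub_right_eq_self g x, hval]
  have hSmeas : MeasurableSet S := by
    rw [hS, setOf_and]
    refine (measurableSet_lt measurable_const measurable_snd).inter
      (measurableSet_lt ?_ measurable_const)
    fun_prop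
  have step1 : (∫ y in S, G x y ^ p) ≤ ∫ y in S, m y := by
    apply integral_mono_of_nonneg
    · refine (ae_restrict_iff' hSmeas).mpr (ae_of_all _ fun y hy => ?_)
      have hGnn : 0 ≤ G x y := by
        apply mul_nonneg (by positivity)
        apply Real.log_nonneg
        have : (0:ℝ) ≤ 4 * x.2 * y.2 / ((x.1 - y.1)^2 + (x.2 - y.2)^2) := by
          apply div_nonneg _ (by positivity)
          have := hy.1
          positivity
        linarith
      exact Real.rpow_nonneg hGnn p
    · exact hm_int.restrict
    · refine (ae_restrict_iff' hSmeas).mpr (ae_of_all _ fun y hy => ?_)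
      obtain ⟨hy1, hy2⟩ := hy
      have hco : (y - x).1 ^ 2 + (y - x).2 ^ 2 = (x.1 - y.1)^2 + (x.2 - y.2)^2 := by
        simp only [Prod.fst_sub, Prod.snd_sub]; ring
      have hmem : (y - x) ∈ {z : ℝ × ℝ | z.1^2 + z.2^2 < α^2} := by
        show (y - x).1 ^ 2 + (y - x).2 ^ 2 < α ^ 2
        rw [hco]; exact hy2
      have : m y = K * x.2 * (Real.sqrt ((x.1 - y.1)^2 + (x.2 - y.2)^2))⁻¹ := by
        rw [hm]
        simp only
        rw [hg, indicator_of_mem hmem, hco]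
      rw [this]
      exact my_pointwise_bound hp x y hx hy1
  have step2 : (∫ y in S, m y) ≤ ∫ y, m y :=
    setIntegral_le_integral hm_int (ae_of_all _ hm_nonneg)
  have hxα : 0 < x.2 * α := mul_pos hx hα
  calc (∫ y in S, G x y ^ p) ≤ ∫ y, m y := step1.trans step2
    _ = K * x.2 * (2 * π * α) := hm_val
    _ = (2 * π * K) * x.2 * α := by ring
    _ ≤ (2 * π * K + 1) * x.2 * α := by nlinarith
end

section
/- For every p ≥ 1 there exists a constant C = C(p) > 0 such that for every x = (x₁, x₂) ∈ ℝ²₊ and every α > 0, one has ∫_{{y ∈ ℝ²₊ : 0 < y₂ ≤ α}} G(x, y)^p dy ≤ C · x₂^{1/2} · α^{3/2}, where G(x, y) = (1/(4π)) log(1 + 4x₂y₂/|x − y|²). -/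
open MeasureTheory Real Set
open scoped ENNReal NNReal

lemma meas_aux (p c : ℝ) :
    Measurable (fun t : ℝ => ENNReal.ofReal ((Real.log (1 + c / t ^ 2)) ^ p)) := by
  measurability

lemma scale (p : ℝ) {c : ℝ} (hc : 0 < c) :
    ∫⁻ t : ℝ, ENNReal.ofReal ((Real.log (1 + c / t ^ 2)) ^ p)
      = ENNReal.ofReal (Real.sqrt c) *
        ∫⁻ u : ℝ, ENNReal.ofReal ((Real.log (1 + 1 / u ^ 2)) ^ p) := by
  have hs : (0:ℝ) < Real.sqrt c := Real.sqrt_pos.2 hc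
  have h2 := lintegral_map (μ := (volume : Measure ℝ)) (meas_aux p c)
    (measurable_const_mul (Real.sqrt c))
  rw [Real.map_volume_mul_left (ne_of_gt hs), lintegral_smul_measure] at h2
  have h1 : (∫⁻ u : ℝ, ENNReal.ofReal ((Real.log (1 + c / (Real.sqrt c * u) ^ 2)) ^ p))
      = ∫⁻ u : ℝ, ENNReal.ofReal ((Real.log (1 + 1 / u ^ 2)) ^ p) := by
    refine lintegral_congr fun u => ?_
    have : c / (Real.sqrt c * u) ^ 2 = 1 / u ^ 2 := by
      rw [mul_pow, Real.sq_sqrt hc.le, ← div_div, div_self hc.ne']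
    rw [this]
  rw [h1] at h2
  rw [← h2, smul_eq_mul, ← mul_assoc, ← ENNReal.ofReal_mul hs.le, abs_of_pos (inv_pos.2 hs),
    mul_inv_cancel₀ hs.ne', ENNReal.ofReal_one, one_mul]

lemma lint_fin_of_integrableOn {s : Set ℝ} {g : ℝ → ℝ} (hgi : IntegrableOn g s)
    (hg : ∀ u ∈ s, 0 ≤ g u) (hs : MeasurableSet s) :
    ∫⁻ u in s, ENNReal.ofReal (g u) < ⊤ := by
  have h0 : 0 ≤ᵐ[volume.restrict s] g :=
    (ae_restrict_iff' hs).2 (Filter.Eventually.of_forall hg)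
  exact (hasFiniteIntegral_iff_ofReal h0).1 hgi.hasFiniteIntegral

lemma K_lt_top (p : ℝ) (hp : 1 ≤ p) :
    ∫⁻ u : ℝ, ENNReal.ofReal ((Real.log (1 + 1 / u ^ 2)) ^ p) < ⊤ := by
  set f : ℝ → ℝ≥0∞ := fun u => ENNReal.ofReal ((Real.log (1 + 1 / u ^ 2)) ^ p) with hfdef
  have hp0 : (0:ℝ) < p := lt_of_lt_of_le one_pos hp
  -- piece on Ioi 1
  have hIoi : ∫⁻ u in Ioi (1:ℝ), f u < ⊤ := by
    have hb : ∀ u ∈ Ioi (1:ℝ), f u ≤ ENNReal.ofReal (u ^ (-2:ℝ)) := by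
      intro u hu
      have hu1 : (1:ℝ) < u := hu
      have hu0 : (0:ℝ) < u := lt_trans one_pos hu1
      apply ENNReal.ofReal_le_ofReal
      have hx1 : (1:ℝ) ≤ 1 + 1/u^2 := le_add_of_nonneg_right (by positivity)
      have h1 : Real.log (1 + 1/u^2) ≤ 1/u^2 := by
        have := Real.log_le_sub_one_of_pos (show (0:ℝ) < 1 + 1/u^2 by positivity)
        linarith
      have h2 : (Real.log (1 + 1/u^2)) ^ p ≤ (1/u^2 : ℝ) ^ p :=
        Real.rpow_le_rpow (Real.log_nonneg hx1) h1 hp0.le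
      have h3 : (1/u^2 : ℝ) ^ p ≤ (1/u^2 : ℝ) ^ (1:ℝ) := by
        apply Real.rpow_le_rpow_of_exponent_ge (by positivity) _ hp
        rw [div_le_one (by positivity)]
        nlinarith
      have h4 : (1/u^2 : ℝ) ^ (1:ℝ) = u ^ (-2:ℝ) := by
        rw [Real.rpow_one, Real.rpow_neg hu0.le, one_div,
          show ((2:ℝ)) = ((2:ℕ):ℝ) by norm_num, Real.rpow_natCast]
      calc (Real.log (1 + 1/u^2)) ^ p ≤ (1/u^2 : ℝ) ^ p := h2
        _ ≤ (1/u^2 : ℝ) ^ (1:ℝ) := h3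
        _ = u ^ (-2:ℝ) := h4
    calc ∫⁻ u in Ioi (1:ℝ), f u ≤ ∫⁻ u in Ioi (1:ℝ), ENNReal.ofReal (u ^ (-2:ℝ)) :=
          setLIntegral_mono_ae' measurableSet_Ioi (Filter.Eventually.of_forall hb)
      _ < ⊤ := lint_fin_of_integrableOn (integrableOn_Ioi_rpow_of_lt (by norm_num) one_pos)
          (fun u hu => Real.rpow_nonneg (le_of_lt (lt_trans one_pos hu)) _) measurableSet_Ioi
  -- piece on Ioc 0 1
  have hIoc : ∫⁻ u in Ioc (0:ℝ) 1, f u < ⊤ := by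
    set ε : ℝ := 1/(4*p) with hε
    have hε0 : (0:ℝ) < ε := by positivity
    set C₀ : ℝ := (2^ε/ε)^p with hC₀
    have hC₀0 : 0 ≤ C₀ := Real.rpow_nonneg (by positivity) _
    have hb : ∀ u ∈ Ioc (0:ℝ) 1, f u ≤ ENNReal.ofReal (C₀ * u ^ (-(1/2):ℝ)) := by
      intro u hu
      obtain ⟨hu0, hu1⟩ := hu
      apply ENNReal.ofReal_le_ofReal
      have hx1 : (1:ℝ) ≤ 1 + 1/u^2 := le_add_of_nonneg_right (by positivity)
      have hx0 : (0:ℝ) < 1 + 1/u^2 := by positivity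
      have hl1 : Real.log (1 + 1/u^2) ≤ (1 + 1/u^2)^ε / ε := by
        have h := Real.log_le_sub_one_of_pos (Real.rpow_pos_of_pos hx0 ε)
        rw [Real.log_rpow hx0] at h
        rw [le_div_iff₀ hε0]
        nlinarith [Real.rpow_pos_of_pos hx0 ε]
      have hl2 : (1:ℝ) + 1/u^2 ≤ 2/u^2 := by
        rw [le_div_iff₀ (by positivity : (0:ℝ) < u^2)]
        have h1 : (1:ℝ)/u^2 * u^2 = 1 := div_mul_cancel₀ 1 (by positivity)
        nlinarith
      have hl3 : Real.log (1 + 1/u^2) ≤ (2/u^2 : ℝ)^ε / ε :=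
        hl1.trans ((div_le_div_iff_of_pos_right hε0).2 (Real.rpow_le_rpow hx0.le hl2 hε0.le))
      have hl4 : (Real.log (1 + 1/u^2)) ^ p ≤ ((2/u^2 : ℝ)^ε / ε) ^ p :=
        Real.rpow_le_rpow (Real.log_nonneg hx1) hl3 hp0.le
      have key : ((2/u^2 : ℝ)^ε / ε) ^ p = C₀ * u ^ (-(1/2):ℝ) := by
        have hu2 : (u:ℝ)^2 = u^((2:ℝ)) := by
          rw [show ((2:ℝ)) = ((2:ℕ):ℝ) by norm_num, Real.rpow_natCast]
        have e1 : (2/u^2 : ℝ)^ε = 2^ε / u^(2*ε) := by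
          rw [Real.div_rpow (by norm_num) (sq_nonneg u), hu2, ← Real.rpow_mul hu0.le]
        rw [e1, div_right_comm, Real.div_rpow (by positivity) (Real.rpow_nonneg hu0.le _),
          ← Real.rpow_mul hu0.le, ← hC₀]
        have : 2*ε*p = 1/2 := by
          rw [hε]; field_simp; ring
        rw [this, div_eq_mul_inv, ← Real.rpow_neg hu0.le]
      calc (Real.log (1 + 1/u^2)) ^ p ≤ ((2/u^2 : ℝ)^ε / ε) ^ p := hl4
        _ = C₀ * u ^ (-(1/2):ℝ) := key
    have hint : IntegrableOn (fun u : ℝ => C₀ * u ^ (-(1/2):ℝ)) (Ioc 0 1) := by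
      have h : IntegrableOn (fun u : ℝ => u ^ (-(1/2):ℝ)) (Ioc 0 1) := by
        rw [← intervalIntegrable_iff_integrableOn_Ioc_of_le zero_le_one]
        exact intervalIntegral.intervalIntegrable_rpow' (by norm_num)
      exact h.const_mul C₀
    calc ∫⁻ u in Ioc (0:ℝ) 1, f u
        ≤ ∫⁻ u in Ioc (0:ℝ) 1, ENNReal.ofReal (C₀ * u ^ (-(1/2):ℝ)) :=
          setLIntegral_mono_ae' measurableSet_Ioc (Filter.Eventually.of_forall hb)
      _ < ⊤ := lint_fin_of_integrableOn hint
          (fun u hu => mul_nonneg hC₀0 (Real.rpow_nonneg hu.1.le _)) measurableSet_Ioc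
  -- assemble
  have hIio : ∫⁻ u in Iio (0:ℝ), f u = ∫⁻ u in Ioi (0:ℝ), f u := by
    have hmp := Measure.measurePreserving_neg (volume : Measure ℝ)
    have hemb : MeasurableEmbedding (Neg.neg : ℝ → ℝ) :=
      (Homeomorph.neg ℝ).measurableEmbedding
    have h := hmp.setLIntegral_comp_preimage_emb hemb f (Ioi 0)
    have hpre : ((Neg.neg : ℝ → ℝ) ⁻¹' (Ioi (0:ℝ))) = Iio 0 := by
      ext z; simp
    rw [hpre] at h
    rw [← h]
    refine setLIntegral_congr_fun measurableSet_Iio (fun u _ => ?_)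
    simp [hfdef, neg_sq]
  have hIci : ∫⁻ u in Ici (0:ℝ), f u = ∫⁻ u in Ioi (0:ℝ), f u :=
    (setLIntegral_congr (Ioi_ae_eq_Ici (a := (0:ℝ)))).symm
  have hIoi0 : ∫⁻ u in Ioi (0:ℝ), f u < ⊤ := by
    have hsplit : Ioi (0:ℝ) = Ioc 0 1 ∪ Ioi 1 := (Set.Ioc_union_Ioi_eq_Ioi zero_le_one).symm
    calc ∫⁻ u in Ioi (0:ℝ), f u = ∫⁻ u in Ioc 0 1 ∪ Ioi 1, f u := by rw [← hsplit]
      _ ≤ (∫⁻ u in Ioc (0:ℝ) 1, f u) + ∫⁻ u in Ioi (1:ℝ), f u := lintegral_union_le _ _ _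
      _ < ⊤ := ENNReal.add_lt_top.2 ⟨hIoc, hIoi⟩
  calc ∫⁻ u, f u = ∫⁻ u in Iio (0:ℝ) ∪ Ici 0, f u := by rw [Iio_union_Ici, setLIntegral_univ]
    _ ≤ (∫⁻ u in Iio (0:ℝ), f u) + ∫⁻ u in Ici (0:ℝ), f u := lintegral_union_le _ _ _
    _ < ⊤ := by rw [hIio, hIci]; exact ENNReal.add_lt_top.2 ⟨hIoi0, hIoi0⟩

lemma measurable_rpow_const (q : ℝ) : Measurable fun r : ℝ => r ^ q := by measurability

lemma measurable_G_rpow (x : ℝ × ℝ) (q : ℝ) : Measurable (fun y : ℝ × ℝ => (G x y) ^ q) := by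
  apply (measurable_rpow_const q).comp
  apply Measurable.const_mul
  apply Real.measurable_log.comp
  apply Measurable.const_add
  exact (measurable_snd.const_mul _).div
    (((measurable_const.sub measurable_fst).pow_const 2).add
      ((measurable_const.sub measurable_snd).pow_const 2))

theorem greens_function_strip_bound (p : ℝ) (hp : 1 ≤ p) :
    ∃ C : ℝ, 0 < C ∧ ∀ x : ℝ × ℝ, 0 < x.2 → ∀ α : ℝ, 0 < α →
      (∫ y in {y : ℝ × ℝ | 0 < y.2 ∧ y.2 ≤ α}, (G x y) ^ p)
        ≤ C * x.2 ^ (1/2 : ℝ) * α ^ (3/2 : ℝ) := by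
  have hp0 : (0:ℝ) < p := lt_of_lt_of_le one_pos hp
  set K : ℝ≥0∞ := ∫⁻ u : ℝ, ENNReal.ofReal ((Real.log (1 + 1 / u ^ 2)) ^ p) with hKdef
  have hKfin : K < ⊤ := K_lt_top p hp
  have hπ : (0:ℝ) < 1 / (4 * π) := by positivity
  set C : ℝ := (1 / (4 * π)) ^ p * (2 * (K.toReal + 1)) with hCdef
  have hC0 : 0 < C := by
    have h1 : (0:ℝ) < (1 / (4 * π)) ^ p := Real.rpow_pos_of_pos hπ p
    have h2 : (0:ℝ) ≤ K.toReal := ENNReal.toReal_nonneg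
    positivity
  refine ⟨C, hC0, ?_⟩
  intro x hx α hα
  set s : Set (ℝ × ℝ) := {y : ℝ × ℝ | 0 < y.2 ∧ y.2 ≤ α} with hsdef
  have hsm : MeasurableSet s := by
    have : s = Prod.snd ⁻¹' (Ioc 0 α) := rfl
    rw [this]; exact measurable_snd measurableSet_Ioc
  set c : ℝ := 4 * x.2 * α with hcdef
  have hcpos : 0 < c := by positivity
  have hRHS0 : 0 ≤ C * x.2 ^ (1/2 : ℝ) * α ^ (3/2 : ℝ) := by positivity
  -- nonnegativity of the integrand on s
  have hGnn : ∀ y ∈ s, 0 ≤ (G x y) ^ p := by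
    intro y hy
    apply Real.rpow_nonneg
    apply mul_nonneg hπ.le
    apply Real.log_nonneg
    have : 0 ≤ 4 * x.2 * y.2 / ((x.1 - y.1)^2 + (x.2 - y.2)^2) := by
      apply div_nonneg _ (by positivity)
      have := hy.1
      positivity
    linarith
  -- measurability of G
  have hGm : Measurable (fun y : ℝ × ℝ => (G x y) ^ p) := measurable_G_rpow x p
  rw [integral_eq_lintegral_of_nonneg_ae
    ((ae_restrict_iff' hsm).2 (Filter.Eventually.of_forall hGnn))
    (hGm.aestronglyMeasurable.restrict)]
  apply ENNReal.toReal_le_of_le_ofReal hRHS0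
  -- the main lintegral bound
  set F : ℝ → ℝ≥0∞ :=
    fun t => ENNReal.ofReal ((1/(4*π))^p * (Real.log (1 + c / (t - x.1)^2))^p) with hFdef
  have hFm : Measurable F := by
    rw [hFdef]
    apply Measurable.ennreal_ofReal
    exact ((measurable_rpow_const p).comp (Real.measurable_log.comp
      (((measurable_const.div ((measurable_sub_const x.1).pow_const 2))).const_add 1))).const_mul _
  -- step 1: pointwise a.e. bound
  have hae : ∀ᵐ y : ℝ × ℝ, y.1 ≠ x.1 := by
    have hN : volume ({y : ℝ × ℝ | y.1 = x.1}) = 0 := by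
      have : {y : ℝ × ℝ | y.1 = x.1} = ({x.1} : Set ℝ) ×ˢ (univ : Set ℝ) := by
        ext y
        simp only [Set.mem_setOf_eq, Set.mem_prod, Set.mem_singleton_iff, Set.mem_univ, and_true]
      rw [this, Measure.volume_eq_prod, Measure.prod_prod, Real.volume_singleton, zero_mul]
    rw [ae_iff]
    convert hN using 2
    ext y; simp
  have step1 : ∫⁻ y in s, ENNReal.ofReal ((G x y) ^ p) ≤ ∫⁻ y in s, F y.1 := by
    apply setLIntegral_mono_ae' hsm
    filter_upwards [hae] with y hy hys
    apply ENNReal.ofReal_le_ofReal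
    have hy1 : (0:ℝ) < (y.1 - x.1)^2 := by
      have : y.1 - x.1 ≠ 0 := sub_ne_zero.2 hy
      positivity
    have hD : 0 < (x.1 - y.1)^2 + (x.2 - y.2)^2 := by nlinarith [sq_nonneg (x.2 - y.2)]
    have hfrac : 4 * x.2 * y.2 / ((x.1 - y.1)^2 + (x.2 - y.2)^2) ≤ c / (y.1 - x.1)^2 := by
      apply div_le_div₀ hcpos.le _ hy1 (by nlinarith [sq_nonneg (x.2 - y.2)])
      have := hys.2
      nlinarith [hys.1, hx]
    have hfr0 : 0 ≤ 4 * x.2 * y.2 / ((x.1 - y.1)^2 + (x.2 - y.2)^2) :=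
      div_nonneg (by nlinarith [hys.1, hx]) hD.le
    have hlognn : 0 ≤ Real.log (1 + 4 * x.2 * y.2 / ((x.1 - y.1)^2 + (x.2 - y.2)^2)) := by
      apply Real.log_nonneg; linarith
    have hlog : Real.log (1 + 4 * x.2 * y.2 / ((x.1 - y.1)^2 + (x.2 - y.2)^2))
        ≤ Real.log (1 + c / (y.1 - x.1)^2) := by
      apply Real.log_le_log (by linarith)
      linarith
    unfold G
    rw [Real.mul_rpow hπ.le hlognn]
    apply mul_le_mul_of_nonneg_left _ (Real.rpow_nonneg hπ.le p)
    exact Real.rpow_le_rpow hlognn hlog hp0.le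
  -- step 2: product structure
  have step2 : ∫⁻ y in s, F y.1 = (∫⁻ t : ℝ, F t) * ENNReal.ofReal α := by
    have hsprod : s = (univ : Set ℝ) ×ˢ Ioc 0 α := by
      ext y; simp [hsdef, Set.mem_prod, and_comm]
    have hres : (volume : Measure (ℝ × ℝ)).restrict ((univ : Set ℝ) ×ˢ Ioc 0 α)
        = ((volume : Measure ℝ).restrict univ).prod ((volume : Measure ℝ).restrict (Ioc 0 α)) := by
      rw [Measure.volume_eq_prod, Measure.prod_restrict]
    rw [hsprod]
    show ∫⁻ y, F y.1 ∂((volume : Measure (ℝ × ℝ)).restrict ((univ : Set ℝ) ×ˢ Ioc 0 α)) = _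
    have hFm1 : Measurable (fun z : ℝ × ℝ => F z.1) := hFm.comp measurable_fst
    rw [hres, lintegral_prod _ hFm1.aemeasurable]
    simp only [lintegral_const, Measure.restrict_apply_univ, Measure.restrict_univ,
      Real.volume_Ioc, sub_zero]
    exact lintegral_mul_const _ hFm
  -- step 3: compute ∫⁻ F
  have step3 : (∫⁻ t : ℝ, F t)
      = ENNReal.ofReal ((1/(4*π))^p) * (ENNReal.ofReal (Real.sqrt c) * K) := by
    have h1 : ∀ t : ℝ, F t = ENNReal.ofReal ((1/(4*π))^p)
        * ENNReal.ofReal ((Real.log (1 + c / (t - x.1)^2))^p) := by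
      intro t
      show ENNReal.ofReal ((1/(4*π))^p * (Real.log (1 + c / (t - x.1)^2))^p) = _
      exact ENNReal.ofReal_mul (Real.rpow_nonneg hπ.le p)
    have hm2 : Measurable fun t : ℝ =>
        ENNReal.ofReal ((Real.log (1 + c / (t - x.1)^2))^p) :=
      (meas_aux p c).comp (measurable_sub_const x.1)
    simp only [h1]
    rw [lintegral_const_mul _ hm2]
    congr 1
    have htrans : ∫⁻ t : ℝ, ENNReal.ofReal ((Real.log (1 + c / (t - x.1)^2))^p)
        = ∫⁻ t : ℝ, ENNReal.ofReal ((Real.log (1 + c / t^2))^p) :=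
      lintegral_sub_right_eq_self (fun t : ℝ => ENNReal.ofReal ((Real.log (1 + c / t^2))^p)) x.1
    rw [htrans, scale p hcpos]
  -- assemble
  calc ∫⁻ y in s, ENNReal.ofReal ((G x y) ^ p)
      ≤ ∫⁻ y in s, F y.1 := step1
    _ = (∫⁻ t : ℝ, F t) * ENNReal.ofReal α := step2
    _ = ENNReal.ofReal ((1/(4*π))^p) * (ENNReal.ofReal (Real.sqrt c) * K) * ENNReal.ofReal α := by
        rw [step3]
    _ ≤ ENNReal.ofReal ((1/(4*π))^p) * (ENNReal.ofReal (Real.sqrt c)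
          * ENNReal.ofReal (K.toReal + 1)) * ENNReal.ofReal α := by
        have hKle : K ≤ ENNReal.ofReal (K.toReal + 1) := by
          calc K = ENNReal.ofReal K.toReal := (ENNReal.ofReal_toReal hKfin.ne).symm
            _ ≤ ENNReal.ofReal (K.toReal + 1) := ENNReal.ofReal_le_ofReal (by linarith)
        gcongr
    _ = ENNReal.ofReal ((1/(4*π))^p * (Real.sqrt c * (K.toReal + 1)) * α) := by
        rw [← ENNReal.ofReal_mul (Real.sqrt_nonneg c),
          ← ENNReal.ofReal_mul (Real.rpow_nonneg hπ.le p),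
          ← ENNReal.ofReal_mul
            (by positivity : (0:ℝ) ≤ (1/(4*π))^p * (Real.sqrt c * (K.toReal + 1)))]
    _ = ENNReal.ofReal (C * x.2 ^ (1/2 : ℝ) * α ^ (3/2 : ℝ)) := by
        congr 1
        have hsqrtc : Real.sqrt c = 2 * Real.sqrt x.2 * Real.sqrt α := by
          rw [hcdef, show (4 : ℝ) * x.2 * α = (2 * Real.sqrt x.2 * Real.sqrt α)^2 by
            rw [mul_pow, mul_pow, Real.sq_sqrt hx.le, Real.sq_sqrt hα.le]; ring]
          exact Real.sqrt_sq (by positivity)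
        have hx12 : x.2 ^ (1/2 : ℝ) = Real.sqrt x.2 := (Real.sqrt_eq_rpow x.2).symm
        have hα32 : α ^ (3/2 : ℝ) = α * Real.sqrt α := by
          rw [show (3/2 : ℝ) = 1 + 1/2 by norm_num, Real.rpow_add hα, Real.rpow_one,
            ← Real.sqrt_eq_rpow]
        rw [hsqrtc, hx12, hα32, hCdef]
        ring
end

section
/- Let p ∈ (1, ∞) and θ ∈ (max{0, (p−2)/(2p−2)}, 1). There exists a constant C = C(p, θ) > 0 such that for every nonnegative ω ∈ L¹ ∩ L^p(ℝ²₊) and every x = (x₁, x₂) ∈ ℝ²₊, the stream function satisfies ψ[ω](x) := ∫_{ℝ²₊} G(x, y) ω(y) dy ≤ C · x₂^{2(1−θ)(1−1/p)} · ‖ω‖_{L¹}^θ · ‖ω‖_{L^p}^{1−θ}. -/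
open MeasureTheory Real Set

def upperHalf : Set (ℝ × ℝ) := {y : ℝ × ℝ | 0 < y.2}

open scoped NNReal ENNReal

lemma measurableSet_upperHalf : MeasurableSet upperHalf :=
  measurableSet_lt measurable_const measurable_snd

lemma one_add_rpow_le {t s : ℝ} (ht : 0 ≤ t) (hs0 : 0 ≤ s) (hs1 : s ≤ 1) :
    (1 + t) ^ s ≤ 1 + t ^ s := by
  have h := NNReal.rpow_add_le_add_rpow 1 t.toNNReal hs0 hs1
  have h' : ((((1 : ℝ≥0) + t.toNNReal) ^ s : ℝ≥0) : ℝ) ≤ (((1:ℝ≥0) ^ s + t.toNNReal ^ s : ℝ≥0) : ℝ) := by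
    exact_mod_cast h
  rw [NNReal.coe_rpow, NNReal.coe_add, NNReal.coe_add, NNReal.coe_rpow, NNReal.coe_rpow] at h'
  simpa [Real.coe_toNNReal t ht] using h'

lemma log_le_rpow {t c : ℝ} (ht : 0 ≤ t) (hc : 1 ≤ c) :
    Real.log (1 + t) ≤ c * t ^ (1/c) := by
  have hc0 : 0 < c := lt_of_lt_of_le one_pos hc
  have h1t : (0:ℝ) < 1 + t := by linarith
  have h1 : Real.log (1 + t) = c * Real.log ((1+t) ^ (1/c)) := by
    rw [Real.log_rpow h1t]; field_simp
  rw [h1]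
  have h2 : Real.log ((1+t) ^ (1/c)) ≤ (1+t)^(1/c) - 1 :=
    Real.log_le_sub_one_of_pos (Real.rpow_pos_of_pos h1t _)
  have h3 : (1+t)^(1/c) ≤ 1 + t^(1/c) :=
    one_add_rpow_le ht (by positivity) (by rw [div_le_one hc0]; linarith)
  exact mul_le_mul_of_nonneg_left (h2.trans (by linarith)) hc0.le

lemma G_nonneg {x y : ℝ × ℝ} (hx : 0 < x.2) (hy : 0 < y.2) : 0 ≤ G x y := by
  apply mul_nonneg (by positivity)
  apply Real.log_nonneg
  have : 0 ≤ 4 * x.2 * y.2 / ((x.1 - y.1)^2 + (x.2 - y.2)^2) := by positivity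
  linarith

lemma G_le {x y : ℝ × ℝ} (hx : 0 < x.2) (hy : 0 < y.2) :
    G x y ≤ (1/(2*π)) * Real.log (1 + 2*x.2 / Real.sqrt ((y.1-x.1)^2 + (y.2-x.2)^2)) := by
  set D : ℝ := (y.1-x.1)^2 + (y.2-x.2)^2 with hD
  have hD0 : 0 ≤ D := by positivity
  have hDeq : (x.1 - y.1)^2 + (x.2 - y.2)^2 = D := by rw [hD]; ring
  rcases eq_or_lt_of_le hD0 with h0 | hpos
  · have h1 : D = 0 := h0.symm
    rw [G, hDeq, h1, Real.sqrt_zero, div_zero, div_zero, add_zero, Real.log_one,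
      mul_zero, mul_zero]
  · set s : ℝ := Real.sqrt D with hs
    have hs0 : 0 < s := Real.sqrt_pos.2 hpos
    have hs2 : s^2 = D := Real.sq_sqrt hD0
    have hyx : y.2 - x.2 ≤ s := by
      have h1 : |y.2 - x.2| ≤ s := by
        rw [hs, ← Real.sqrt_sq_eq_abs]
        exact Real.sqrt_le_sqrt (by rw [hD]; nlinarith [sq_nonneg (y.1-x.1)])
      exact (le_abs_self _).trans h1
    have key : 1 + 4 * x.2 * y.2 / D ≤ (1 + 2*x.2/s)^2 := by
      have hexp : (1 + 2*x.2/s)^2 - (1 + 4 * x.2 * y.2 / D) =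
          (4*x.2*(s + x.2 - y.2))/D := by
        rw [← hs2]; field_simp; ring
      nlinarith [div_nonneg (by nlinarith : (0:ℝ) ≤ 4*x.2*(s + x.2 - y.2)) hD0]
    have hpos1 : (0:ℝ) < 1 + 4 * x.2 * y.2 / D := by positivity
    have hlog : Real.log (1 + 4 * x.2 * y.2 / D) ≤ 2 * Real.log (1 + 2*x.2/s) := by
      calc Real.log (1 + 4 * x.2 * y.2 / D) ≤ Real.log ((1 + 2*x.2/s)^2) :=
            Real.log_le_log hpos1 key
        _ = 2 * Real.log (1 + 2*x.2/s) := by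
            rw [Real.log_pow]; push_cast; ring
    rw [G, hDeq]
    have hpi : 0 < π := Real.pi_pos
    calc (1 / (4 * π)) * Real.log (1 + 4 * x.2 * y.2 / D)
        ≤ (1 / (4 * π)) * (2 * Real.log (1 + 2*x.2/s)) := by
          apply mul_le_mul_of_nonneg_left hlog (by positivity)
      _ = (1/(2*π)) * Real.log (1 + 2*x.2/s) := by ring

lemma oneD {q' b : ℝ} (hq' : 2 < q') (hb : 0 < b) :
    IntegrableOn (fun u : ℝ => u * ((1/(2*π)) * Real.log (1 + b / u))^q') (Ioi 0) ∧
    ∫ u in Ioi 0, u * ((1/(2*π)) * Real.log (1 + b / u))^q' ≤ (q'^q' + 1/(q'-2)) * b^2 := by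
  have hq'1 : (1:ℝ) ≤ q' := by linarith
  have hq'0 : (0:ℝ) < q' := by linarith
  have hpi : (0:ℝ) < π := Real.pi_pos
  have hm1 : (1:ℝ)/(2*π) ≤ 1 := by
    rw [div_le_one (by positivity)]; nlinarith [Real.pi_gt_three]
  set h : ℝ → ℝ := fun u => u * ((1/(2*π)) * Real.log (1 + b / u))^q' with hh
  have hmeas : Measurable h := by
    apply measurable_id.mul
    exact ((((measurable_const.div measurable_id).const_add 1).log.const_mul _).pow measurable_const)
  -- nonneg and key pointwise bounds
  have hnn : ∀ u : ℝ, 0 < u → 0 ≤ h u := by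
    intro u hu
    apply mul_nonneg hu.le
    apply Real.rpow_nonneg
    apply mul_nonneg (by positivity)
    apply Real.log_nonneg
    have h0 : 0 ≤ b/u := by positivity
    linarith
  have hLnn : ∀ u : ℝ, 0 < u → 0 ≤ Real.log (1 + b/u) := by
    intro u hu
    apply Real.log_nonneg
    have h0 : 0 ≤ b/u := by positivity
    linarith
  have hmL : ∀ u : ℝ, 0 < u →
      ((1/(2*π)) * Real.log (1 + b / u))^q' ≤ (Real.log (1 + b/u))^q' := by
    intro u hu
    apply Real.rpow_le_rpow (mul_nonneg (by positivity) (hLnn u hu)) _ hq'0.le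
    nlinarith [hLnn u hu]
  have hbd1 : ∀ u ∈ Ioc (0:ℝ) b, h u ≤ q'^q' * b := by
    intro u hu
    obtain ⟨hu0, hub⟩ := hu
    have hL : Real.log (1 + b/u) ≤ q' * (b/u) ^ (1/q') :=
      log_le_rpow (by positivity) hq'1
    have h2 : (Real.log (1 + b/u))^q' ≤ (q' * (b/u) ^ (1/q'))^q' :=
      Real.rpow_le_rpow (hLnn u hu0) hL hq'0.le
    have h3 : (q' * (b/u) ^ (1/q'))^q' = q'^q' * (b/u) := by
      rw [Real.mul_rpow hq'0.le (Real.rpow_nonneg (by positivity) _),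
        ← Real.rpow_mul (by positivity), one_div_mul_cancel (ne_of_gt hq'0), Real.rpow_one]
    calc h u ≤ u * (q'^q' * (b/u)) := by
          apply mul_le_mul_of_nonneg_left _ hu0.le
          exact (hmL u hu0).trans (h2.trans_eq h3)
      _ = q'^q' * b := by field_simp
  have hbd2 : ∀ u ∈ Ioi b, h u ≤ b^q' * u^(1-q') := by
    intro u hu
    have hu0 : 0 < u := hb.trans hu
    have hL : Real.log (1 + b/u) ≤ b/u := by
      have := Real.log_le_sub_one_of_pos (show (0:ℝ) < 1 + b/u by positivity)
      linarith
    have h2 : (Real.log (1 + b/u))^q' ≤ (b/u)^q' :=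
      Real.rpow_le_rpow (hLnn u hu0) hL hq'0.le
    have h3 : (b/u)^q' = b^q' / u^q' := Real.div_rpow hb.le hu0.le q'
    calc h u ≤ u * (b^q' / u^q') := by
          apply mul_le_mul_of_nonneg_left _ hu0.le
          exact (hmL u hu0).trans (h2.trans_eq h3)
      _ = b^q' * u^(1-q') := by
          rw [Real.rpow_sub hu0, Real.rpow_one]; ring
  -- integrability pieces
  have hIoc_const : IntegrableOn (fun _ : ℝ => q'^q' * b) (Ioc 0 b) := by
    refine integrableOn_const ?_
    rw [Real.volume_Ioc]; exact ENNReal.ofReal_lt_top.ne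
  have hint1 : IntegrableOn h (Ioc 0 b) := by
    apply Integrable.mono' hIoc_const (hmeas.aestronglyMeasurable.restrict)
    rw [ae_restrict_iff' measurableSet_Ioc]
    refine ae_of_all _ fun u hu => ?_
    rw [Real.norm_eq_abs, abs_of_nonneg (hnn u hu.1)]
    exact hbd1 u hu
  have hIoi_maj : IntegrableOn (fun u : ℝ => b^q' * u^(1-q')) (Ioi b) :=
    (integrableOn_Ioi_rpow_of_lt (by linarith) hb).const_mul _
  have hint2 : IntegrableOn h (Ioi b) := by
    apply Integrable.mono' hIoi_maj (hmeas.aestronglyMeasurable.restrict)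
    rw [ae_restrict_iff' measurableSet_Ioi]
    refine ae_of_all _ fun u hu => ?_
    rw [Real.norm_eq_abs, abs_of_nonneg (hnn u (hb.trans hu))]
    exact hbd2 u hu
  have hunion : Ioc (0:ℝ) b ∪ Ioi b = Ioi 0 := Ioc_union_Ioi_eq_Ioi hb.le
  constructor
  · rw [← hunion]; exact hint1.union hint2
  · rw [← hunion, setIntegral_union (Ioc_disjoint_Ioi le_rfl) measurableSet_Ioi hint1 hint2]
    have hI1 : ∫ u in Ioc (0:ℝ) b, h u ≤ q'^q' * b^2 := by
      calc ∫ u in Ioc (0:ℝ) b, h u ≤ ∫ _ in Ioc (0:ℝ) b, q'^q' * b :=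
            setIntegral_mono_on hint1 hIoc_const measurableSet_Ioc hbd1
        _ = q'^q' * b^2 := by
            rw [setIntegral_const, Real.volume_real_Ioc_of_le (by linarith)]
            simp only [smul_eq_mul]; ring
    have hI2 : ∫ u in Ioi b, h u ≤ 1/(q'-2) * b^2 := by
      calc ∫ u in Ioi b, h u ≤ ∫ u in Ioi b, b^q' * u^(1-q') :=
            setIntegral_mono_on hint2 hIoi_maj measurableSet_Ioi hbd2
        _ = b^q' * (-b^(1-q'+1)/(1-q'+1)) := by
            rw [integral_const_mul, integral_Ioi_rpow_of_lt (by linarith) hb]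
        _ = 1/(q'-2) * b^2 := by
            have hbb : b^q' * b^(1-q'+1) = b^2 := by
              rw [← Real.rpow_add hb, show q' + (1-q'+1) = (2:ℝ) by ring, Real.rpow_two]
            have hne : q' - 2 ≠ 0 := by linarith
            calc b^q' * (-b^(1-q'+1)/(1-q'+1))
                = (b^q' * b^(1-q'+1)) * (-(1/(1-q'+1))) := by ring
              _ = b^2 * (1/(q'-2)) := by
                  rw [hbb, show (1-q'+1) = -(q'-2) by ring]
                  rw [div_neg, neg_neg]
              _ = 1/(q'-2) * b^2 := by ring
    linarith

lemma majorant {q' : ℝ} (hq' : 2 < q') {b : ℝ} (hb : 0 < b) :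
    Integrable (fun z : ℝ×ℝ => ((1/(2*π)) * Real.log (1 + b / Real.sqrt (z.1^2+z.2^2)))^q') ∧
    ∫ z : ℝ×ℝ, ((1/(2*π)) * Real.log (1 + b / Real.sqrt (z.1^2+z.2^2)))^q'
      ≤ (2*π*(q'^q' + 1/(q'-2))) * b^2 := by
  have hpi : (0:ℝ) < π := Real.pi_pos
  set N : ℝ×ℝ → ℝ := fun z => ((1/(2*π)) * Real.log (1 + b / Real.sqrt (z.1^2+z.2^2)))^q'
    with hN
  set F : ℝ×ℝ → ℝ := fun p => p.1 * ((1/(2*π)) * Real.log (1 + b / p.1))^q' with hF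
  have hNmeas : Measurable N := by
    apply Measurable.pow _ measurable_const
    apply Measurable.const_mul
    apply Measurable.log
    apply Measurable.const_add
    apply Measurable.const_div
    exact ((measurable_fst.pow_const 2).add (measurable_snd.pow_const 2)).sqrt
  -- the target-side function agrees with F on the target
  have hkey : ∀ p ∈ polarCoord.target, p.1 • N (polarCoord.symm p) = F p := by
    rintro ⟨r, θ⟩ hp
    have hr : 0 < r := hp.1
    have hsq : (r * Real.cos θ)^2 + (r * Real.sin θ)^2 = r^2 := by
      have h := Real.sin_sq_add_cos_sq θ
      nlinarith [h]
    show r • N (r * Real.cos θ, r * Real.sin θ) = F (r, θ)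
    rw [hN, hF]
    simp only [smul_eq_mul]
    rw [hsq, Real.sqrt_sq hr.le]
  -- derivative data (as in Mathlib's polar coordinate change of variables)
  set B : ℝ × ℝ → ℝ × ℝ →L[ℝ] ℝ × ℝ := fun p =>
    LinearMap.toContinuousLinearMap (Matrix.toLin (Module.Basis.finTwoProd ℝ) (Module.Basis.finTwoProd ℝ)
      !![Real.cos p.2, -p.1 * Real.sin p.2; Real.sin p.2, p.1 * Real.cos p.2]) with hB
  have hA : ∀ p ∈ polarCoord.target,
      HasFDerivWithinAt polarCoord.symm (B p) polarCoord.target p := fun p _ =>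
    (hasFDerivAt_polarCoord_symm p).hasFDerivWithinAt
  have hBdet : ∀ p, (B p).det = p.1 := by
    intro p
    conv_rhs => rw [← one_mul p.1, ← Real.cos_sq_add_sin_sq p.2]
    simp only [hB, neg_mul, LinearMap.det_toContinuousLinearMap, LinearMap.det_toLin,
      Matrix.det_fin_two_of, sub_neg_eq_add]
    ring
  have hS : MeasurableSet polarCoord.target := polarCoord.open_target.measurableSet
  have hinj : InjOn polarCoord.symm polarCoord.target := polarCoord.symm.injOn
  -- 1D integrability and bound
  obtain ⟨h1int, h1bd⟩ := oneD hq' hb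
  -- integrability of F on the target
  have hFi : IntegrableOn F polarCoord.target := by
    have : polarCoord.target = Ioi (0:ℝ) ×ˢ Ioo (-π) π := rfl
    rw [this]
    have h2 : IntegrableOn (fun _ : ℝ => (1:ℝ)) (Ioo (-π) π) := by
      refine integrableOn_const ?_
      rw [Real.volume_Ioo]; exact ENNReal.ofReal_lt_top.ne
    have h3 := h1int.mul_prod h2
    rw [Measure.prod_restrict] at h3
    rw [Measure.volume_eq_prod]
    have h4 : IntegrableOn
        (fun z : ℝ×ℝ => (z.1 * ((1/(2*π)) * Real.log (1 + b / z.1))^q') * 1)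
        (Ioi (0:ℝ) ×ˢ Ioo (-π) π) (volume.prod volume) := h3
    apply h4.congr_fun _ (measurableSet_Ioi.prod measurableSet_Ioo)
    intro p _
    simp [hF]
  -- transfer integrability
  have htrans := integrableOn_image_iff_integrableOn_abs_det_fderiv_smul volume hS hA hinj N
  rw [polarCoord.symm_image_target_eq_source] at htrans
  have hNint_source : IntegrableOn N polarCoord.source := by
    rw [htrans]
    apply hFi.congr_fun _ hS
    intro p hp
    show F p = |(B p).det| • N (polarCoord.symm p)
    rw [hBdet p, abs_of_pos (show (0:ℝ) < p.1 from hp.1)]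
    exact (hkey p hp).symm
  have hNint : Integrable N := by
    rw [← integrableOn_univ]
    exact hNint_source.congr_set_ae polarCoord_source_ae_eq_univ.symm
  refine ⟨hNint, ?_⟩
  -- value via Mathlib's change of variables
  have hval := integral_comp_polarCoord_symm N
  rw [← hval]
  have hval2 : (∫ p in polarCoord.target, p.1 • N (polarCoord.symm p)) =
      ∫ p in polarCoord.target, F p :=
    setIntegral_congr_fun hS hkey
  rw [hval2]
  have : polarCoord.target = Ioi (0:ℝ) ×ˢ Ioo (-π) π := rfl
  rw [this]
  have hsplit : (∫ p in Ioi (0:ℝ) ×ˢ Ioo (-π) π, F p) =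
      (∫ u in Ioi (0:ℝ), u * ((1/(2*π)) * Real.log (1 + b / u))^q') * ∫ _ in Ioo (-π) π, (1:ℝ) := by
    rw [Measure.volume_eq_prod]
    rw [← setIntegral_prod_mul]
    apply setIntegral_congr_fun (measurableSet_Ioi.prod measurableSet_Ioo)
    intro p _
    simp [hF]
  rw [hsplit]
  have hIoo : (∫ _ in Ioo (-π) π, (1:ℝ)) = 2*π := by
    rw [setIntegral_const, Real.volume_real_Ioo_of_le (by linarith)]
    simp only [smul_eq_mul, mul_one]; ring
  rw [hIoo]
  calc (∫ u in Ioi (0:ℝ), u * ((1/(2*π)) * Real.log (1 + b / u))^q') * (2*π)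
      ≤ ((q'^q' + 1/(q'-2)) * b^2) * (2*π) := by
        apply mul_le_mul_of_nonneg_right h1bd (by positivity)
    _ = (2*π*(q'^q' + 1/(q'-2))) * b^2 := by ring

lemma Gq_bound {q' : ℝ} (hq' : 2 < q') {x : ℝ×ℝ} (hx : 0 < x.2) :
    ∫⁻ y in upperHalf, (ENNReal.ofReal (G x y))^q' ≤
      ENNReal.ofReal ((8*π*(q'^q' + 1/(q'-2))) * x.2^2) := by
  have hq'0 : (0:ℝ) < q' := by linarith
  have hb : (0:ℝ) < 2*x.2 := by linarith
  set N : ℝ×ℝ → ℝ :=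
    fun z => ((1/(2*π)) * Real.log (1 + (2*x.2) / Real.sqrt (z.1^2+z.2^2)))^q' with hN
  have hNnn : ∀ z, 0 ≤ N z := by
    intro z
    apply Real.rpow_nonneg
    apply mul_nonneg (by positivity)
    apply Real.log_nonneg
    have h0 : 0 ≤ 2*x.2 / Real.sqrt (z.1^2+z.2^2) := by positivity
    linarith
  obtain ⟨hNint, hNbd⟩ := majorant hq' hb
  calc ∫⁻ y in upperHalf, (ENNReal.ofReal (G x y))^q'
      ≤ ∫⁻ y in upperHalf, ENNReal.ofReal (N (y - x)) := by
        refine lintegral_mono_ae ((ae_restrict_iff' measurableSet_upperHalf).2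
          (ae_of_all _ fun y hy => ?_))
        have hy2 : 0 < y.2 := hy
        have hGnn := G_nonneg hx hy2
        have hGle := G_le hx hy2
        rw [ENNReal.ofReal_rpow_of_nonneg hGnn hq'0.le]
        apply ENNReal.ofReal_le_ofReal
        have : N (y - x) = ((1/(2*π)) *
            Real.log (1 + 2*x.2 / Real.sqrt ((y.1-x.1)^2 + (y.2-x.2)^2)))^q' := by
          simp only [hN, Prod.fst_sub, Prod.snd_sub]
        rw [this]
        apply Real.rpow_le_rpow hGnn hGle hq'0.le
    _ ≤ ∫⁻ y, ENNReal.ofReal (N (y - x)) := setLIntegral_le_lintegral _ _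
    _ = ∫⁻ z, ENNReal.ofReal (N z) :=
        lintegral_sub_right_eq_self (fun z => ENNReal.ofReal (N z)) x
    _ = ENNReal.ofReal (∫ z, N z) :=
        (ofReal_integral_eq_lintegral_ofReal hNint (ae_of_all _ hNnn)).symm
    _ ≤ ENNReal.ofReal ((8*π*(q'^q' + 1/(q'-2))) * x.2^2) := by
        apply ENNReal.ofReal_le_ofReal
        calc ∫ z, N z ≤ (2*π*(q'^q' + 1/(q'-2))) * (2*x.2)^2 := hNbd
          _ = (8*π*(q'^q' + 1/(q'-2))) * x.2^2 := by ring

theorem stream_function_pointwise_bound (p θ : ℝ) (hp : 1 < p)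
    (hθl : max 0 ((p - 2) / (2 * p - 2)) < θ) (hθu : θ < 1) :
    ∃ C : ℝ, 0 < C ∧ ∀ ω : ℝ × ℝ → ℝ, (∀ y, 0 ≤ ω y) →
      IntegrableOn ω upperHalf → IntegrableOn (fun y => ω y ^ p) upperHalf →
      ∀ x : ℝ × ℝ, 0 < x.2 →
        (∫ y in upperHalf, G x y * ω y) ≤
          C * x.2 ^ (2 * (1 - θ) * (1 - 1/p)) * (∫ y in upperHalf, ω y) ^ θ *
            ((∫ y in upperHalf, ω y ^ p) ^ (1/p)) ^ (1 - θ) := by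
  have hp0 : (0:ℝ) < p := by linarith
  have hθ0 : 0 < θ := lt_of_le_of_lt (le_max_left _ _) hθl
  have h1θ : 0 < 1 - θ := by linarith
  set r : ℝ := θ + (1-θ)/p with hr
  have hr0 : 0 < r := add_pos hθ0 (div_pos h1θ hp0)
  have hrθ : θ < r := by
    have : 0 < (1-θ)/p := div_pos h1θ hp0
    simp only [hr]; linarith
  have hr1 : r < 1 := by
    have : (1-θ)/p < 1-θ := div_lt_self h1θ hp
    simp only [hr]; linarith
  have hrhalf : 1/2 < r := by
    have h2p : (0:ℝ) < 2*p - 2 := by linarith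
    have hθl' : (p-2)/(2*p-2) < θ := lt_of_le_of_lt (le_max_right _ _) hθl
    have h3 : p - 2 < θ*(2*p-2) := by rwa [div_lt_iff₀ h2p] at hθl'
    have h5 : θ + (1-θ)/p - 1/2 = (θ*(2*p-2) - (p-2))/(2*p) := by field_simp; ring
    have h6 : 0 < (θ*(2*p-2) - (p-2))/(2*p) :=
      div_pos (by linarith) (by linarith)
    simp only [hr]; linarith
  have h1r : 0 < 1 - r := by linarith
  clear_value r
  set q : ℝ := 1/r with hq
  set q' : ℝ := 1/(1-r) with hq'
  clear_value q q'
  have hq'2 : 2 < q' := by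
    rw [hq', lt_div_iff₀ h1r]; linarith
  have hq'0 : (0:ℝ) < q' := by linarith
  have hpq : q'.HolderConjugate q := by
    constructor
    · rw [hq', hq, one_div, one_div, inv_inv, inv_inv]; ring
    · linarith
    · rw [hq]; exact one_div_pos.mpr hr0
  set K : ℝ := 8*π*(q'^q' + 1/(q'-2)) with hK
  have hKpos : 0 < K := by
    have h1 : (0:ℝ) < q'^q' := Real.rpow_pos_of_pos hq'0 _
    have h2 : (0:ℝ) < 1/(q'-2) := by
      apply div_pos one_pos; linarith
    have := Real.pi_pos
    positivity
  refine ⟨K ^ (1-r), Real.rpow_pos_of_pos hKpos _, ?_⟩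
  intro ω hω hω1 hωp x hx2
  set A := ∫ y in upperHalf, ω y with hA
  set Bp := ∫ y in upperHalf, ω y ^ p with hBp
  have hA0 : 0 ≤ A := setIntegral_nonneg measurableSet_upperHalf (fun y _ => hω y)
  have hB0 : 0 ≤ Bp := setIntegral_nonneg measurableSet_upperHalf
    (fun y _ => Real.rpow_nonneg (hω y) p)
  have hGmeas : Measurable (fun y : ℝ×ℝ => G x y) := by
    apply Measurable.const_mul
    apply Measurable.log
    apply Measurable.const_add
    apply Measurable.div
    · exact (measurable_const.mul measurable_snd)
    · exact ((measurable_const.sub measurable_fst).pow_const 2).add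
        ((measurable_const.sub measurable_snd).pow_const 2)
  have hGωnn : 0 ≤ᵐ[volume.restrict upperHalf] fun y => G x y * ω y :=
    (ae_restrict_iff' measurableSet_upperHalf).2
      (ae_of_all _ fun y hy => mul_nonneg (G_nonneg hx2 hy) (hω y))
  have hRHS0 : 0 ≤ K ^ (1-r) * x.2 ^ (2 * (1 - θ) * (1 - 1/p)) * A ^ θ *
      (Bp ^ (1/p)) ^ (1 - θ) :=
    mul_nonneg (mul_nonneg (mul_nonneg (Real.rpow_nonneg hKpos.le _)
      (Real.rpow_nonneg hx2.le _)) (Real.rpow_nonneg hA0 _))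
      (Real.rpow_nonneg (Real.rpow_nonneg hB0 _) _)
  rw [integral_eq_lintegral_of_nonneg_ae hGωnn
    ((hGmeas.aestronglyMeasurable).mul hω1.1)]
  apply ENNReal.toReal_le_of_le_ofReal hRHS0
  -- now an ENNReal inequality
  set g : ℝ×ℝ → ℝ≥0∞ := fun y => ENNReal.ofReal (ω y) with hg
  set f : ℝ×ℝ → ℝ≥0∞ := fun y => ENNReal.ofReal (G x y) with hf
  have hgmeas : AEMeasurable g (volume.restrict upperHalf) :=
    ENNReal.measurable_ofReal.comp_aemeasurable hω1.1.aemeasurable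
  have hfmeas : AEMeasurable f (volume.restrict upperHalf) :=
    (ENNReal.measurable_ofReal.comp hGmeas).aemeasurable
  have step0 : ∫⁻ y in upperHalf, ENNReal.ofReal (G x y * ω y) =
      ∫⁻ y in upperHalf, (f * g) y := by
    refine lintegral_congr_ae ((ae_restrict_iff' measurableSet_upperHalf).2
      (ae_of_all _ fun y hy => ?_))
    simp only [Pi.mul_apply, hf, hg]
    rw [ENNReal.ofReal_mul (G_nonneg hx2 hy)]
  have hHolder := ENNReal.lintegral_mul_le_Lp_mul_Lq (volume.restrict upperHalf)
    hpq hfmeas hgmeas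
  -- lintegrals of ω
  have hgint1 : ∫⁻ y in upperHalf, g y = ENNReal.ofReal A := by
    rw [hg, hA]
    exact (ofReal_integral_eq_lintegral_ofReal hω1
      (ae_of_all _ fun y => hω y)).symm
  have hgintp : ∫⁻ y in upperHalf, (g y)^p = ENNReal.ofReal Bp := by
    have h1 : ∀ y : ℝ×ℝ, (g y)^p = ENNReal.ofReal (ω y ^ p) := fun y =>
      ENNReal.ofReal_rpow_of_nonneg (hω y) hp0.le
    rw [lintegral_congr fun y => h1 y, hBp]
    exact (ofReal_integral_eq_lintegral_ofReal hωp
      (ae_of_all _ fun y => Real.rpow_nonneg (hω y) p)).symm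
  -- interpolation
  have hab : (r/θ).HolderConjugate (r*p/(1-θ)) := by
    constructor
    · rw [inv_div, inv_div, inv_one, mul_comm r p, ← div_div, ← add_div, ← hr,
        div_self hr0.ne']
    · exact div_pos hr0 hθ0
    · exact div_pos (mul_pos hr0 hp0) h1θ
  have hInterp := ENNReal.lintegral_mul_le_Lp_mul_Lq (volume.restrict upperHalf)
    hab (hgmeas.pow_const (θ/r)) (hgmeas.pow_const ((1-θ)/r))
  have hIl : ∫⁻ y in upperHalf, ((fun y => (g y)^(θ/r)) * (fun y => (g y)^((1-θ)/r))) y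
      = ∫⁻ y in upperHalf, (g y)^q := by
    apply lintegral_congr fun y => ?_
    simp only [Pi.mul_apply]
    rw [← ENNReal.rpow_add_of_nonneg _ _ (by positivity) (by positivity)]
    congr 1
    rw [hq, ← add_div]
    congr 1
    ring
  have hIr1 : ∫⁻ y in upperHalf, ((g y)^(θ/r))^(r/θ) = ENNReal.ofReal A := by
    rw [← hgint1]
    apply lintegral_congr fun y => ?_
    rw [← ENNReal.rpow_mul, div_mul_div_comm, mul_comm θ r, div_self (by positivity),
      ENNReal.rpow_one]
  have hIr2 : ∫⁻ y in upperHalf, ((g y)^((1-θ)/r))^(r*p/(1-θ)) = ENNReal.ofReal Bp := by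
    rw [← hgintp]
    apply lintegral_congr fun y => ?_
    rw [← ENNReal.rpow_mul]
    congr 1
    field_simp
  rw [hIl, hIr1, hIr2] at hInterp
  have hF2 : (∫⁻ y in upperHalf, (g y)^q)^(1/q) ≤
      ENNReal.ofReal (A^θ) * ENNReal.ofReal (Bp^((1-θ)/p)) := by
    have h1 : (∫⁻ y in upperHalf, (g y)^q)^(1/q) ≤
        ((ENNReal.ofReal A)^(1/(r/θ)) * (ENNReal.ofReal Bp)^(1/(r*p/(1-θ))))^r := by
      have hqq : 1/q = r := by rw [hq, one_div_one_div]
      rw [hqq]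
      exact ENNReal.rpow_le_rpow hInterp hr0.le
    refine h1.trans (le_of_eq ?_)
    have hrne : r ≠ 0 := ne_of_gt hr0
    have hθne : θ ≠ 0 := ne_of_gt hθ0
    have hpne : p ≠ 0 := ne_of_gt hp0
    have h1θne : (1:ℝ) - θ ≠ 0 := ne_of_gt h1θ
    have ea : 1/(r/θ) * r = θ := by field_simp
    have eb : 1/(r*p/(1-θ)) * r = (1-θ)/p := by field_simp
    rw [ENNReal.mul_rpow_of_nonneg _ _ hr0.le, ← ENNReal.rpow_mul, ← ENNReal.rpow_mul,
      ea, eb, ENNReal.ofReal_rpow_of_nonneg hA0 hθ0.le,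
      ENNReal.ofReal_rpow_of_nonneg hB0 (by positivity)]
  have hF1 : (∫⁻ y in upperHalf, (f y)^q')^(1/q') ≤
      ENNReal.ofReal ((K * x.2^2)^(1-r)) := by
    have h0 : 0 ≤ K * x.2^2 := by positivity
    calc (∫⁻ y in upperHalf, (f y)^q')^(1/q')
        ≤ (ENNReal.ofReal (K * x.2^2))^(1/q') := by
          apply ENNReal.rpow_le_rpow _ (by positivity)
          simp only [hf, hK]
          exact Gq_bound hq'2 hx2
      _ = ENNReal.ofReal ((K * x.2^2)^(1/q')) := ENNReal.ofReal_rpow_of_nonneg h0 (by positivity)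
      _ = ENNReal.ofReal ((K * x.2^2)^(1-r)) := by rw [hq', one_div_one_div]
  calc ∫⁻ y in upperHalf, ENNReal.ofReal (G x y * ω y)
      = ∫⁻ y in upperHalf, (f * g) y := step0
    _ ≤ (∫⁻ y in upperHalf, (f y)^q')^(1/q') * (∫⁻ y in upperHalf, (g y)^q)^(1/q) := hHolder
    _ ≤ ENNReal.ofReal ((K * x.2^2)^(1-r)) *
          (ENNReal.ofReal (A^θ) * ENNReal.ofReal (Bp^((1-θ)/p))) := mul_le_mul' hF1 hF2
    _ = ENNReal.ofReal ((K * x.2^2)^(1-r) * (A^θ * Bp^((1-θ)/p))) := by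
        rw [← ENNReal.ofReal_mul (Real.rpow_nonneg hA0 _),
          ← ENNReal.ofReal_mul (Real.rpow_nonneg (by positivity) _)]
    _ ≤ ENNReal.ofReal (K ^ (1-r) * x.2 ^ (2 * (1 - θ) * (1 - 1/p)) * A ^ θ *
          (Bp ^ (1/p)) ^ (1 - θ)) := by
        apply ENNReal.ofReal_le_ofReal
        apply le_of_eq
        have e1 : (K * x.2^2)^(1-r) = K^(1-r) * x.2 ^ (2 * (1 - θ) * (1 - 1/p)) := by
          rw [Real.mul_rpow hKpos.le (by positivity), ← Real.rpow_two,
            ← Real.rpow_mul hx2.le]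
          congr 1
          rw [hr]; field_simp; ring
        have e2 : Bp^((1-θ)/p) = (Bp ^ (1/p)) ^ (1 - θ) := by
          rw [← Real.rpow_mul hB0]
          congr 1
          ring
        rw [e1, e2]; ring
end

section
/- Let ω : ℝ²₊ → [0, ∞) be integrable and suppose the marginal function m(y₁) := ∫₀^∞ ω(y₁, y₂) dy₂ is even in y₁ and non-increasing on [0, ∞). Then for every A ≥ 2 and every x₁ > 0, the horizontal slab estimate ∫_{{y ∈ ℝ²₊ : |x₁ − y₁| < x₁/A}} ω(y) dy ≤ (4/A) · ‖ω‖_{L¹(ℝ²₊)} holds. -/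
open MeasureTheory Real Set

theorem steiner_slab_estimate (ω : ℝ × ℝ → ℝ) (h0 : ∀ y, 0 ≤ ω y)
    (hint : IntegrableOn ω upperHalf)
    (heven : ∀ t : ℝ, (∫ s in Ioi (0:ℝ), ω (-t, s)) = ∫ s in Ioi (0:ℝ), ω (t, s))
    (hmono : AntitoneOn (fun t : ℝ => ∫ s in Ioi (0:ℝ), ω (t, s)) (Ici 0)) :
    ∀ A : ℝ, 2 ≤ A → ∀ x₁ : ℝ, 0 < x₁ →
      (∫ y in {y : ℝ × ℝ | 0 < y.2 ∧ |x₁ - y.1| < x₁ / A}, ω y)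
        ≤ (4 / A) * ∫ y in upperHalf, ω y := by
  intro A hA x₁ hx₁
  have hApos : (0:ℝ) < A := lt_of_lt_of_le two_pos hA
  set m : ℝ → ℝ := fun t => ∫ s in Ioi (0:ℝ), ω (t, s) with hmdef
  have hm0 : ∀ t, 0 ≤ m t := fun t => integral_nonneg fun s => h0 _
  set a := x₁ - x₁ / A with ha
  set b := x₁ + x₁ / A with hb
  have hfrac : x₁ / A ≤ x₁ / 2 := by
    apply div_le_div_of_nonneg_left hx₁.le two_pos hA
  have hapos : 0 < a := by
    have : x₁ / 2 < x₁ := by linarith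
    simp only [ha]; linarith
  have h2a : x₁ ≤ 2 * a := by simp only [ha]; linarith
  -- product structure
  have hUH : upperHalf = (univ : Set ℝ) ×ˢ Ioi (0:ℝ) := by
    ext y; simp [upperHalf, mem_prod]
  have hslab : {y : ℝ × ℝ | 0 < y.2 ∧ |x₁ - y.1| < x₁ / A} = Ioo a b ×ˢ Ioi (0:ℝ) := by
    ext y
    simp only [mem_setOf_eq, mem_prod, mem_Ioo, mem_Ioi, abs_lt, ha, hb]
    constructor
    · rintro ⟨h1, h2, h3⟩; exact ⟨⟨by linarith, by linarith⟩, h1⟩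
    · rintro ⟨⟨h2, h3⟩, h1⟩; exact ⟨h1, by linarith, by linarith⟩
  have hslabsub : {y : ℝ × ℝ | 0 < y.2 ∧ |x₁ - y.1| < x₁ / A} ⊆ upperHalf :=
    fun y hy => hy.1
  -- rewrite restricted measures as products
  have hvol : (volume : Measure (ℝ × ℝ)) = (volume : Measure ℝ).prod volume :=
    (Measure.volume_eq_prod ℝ ℝ)
  have hrestr : (volume : Measure (ℝ × ℝ)).restrict ((univ : Set ℝ) ×ˢ Ioi (0:ℝ))
      = ((volume : Measure ℝ).restrict univ).prod ((volume : Measure ℝ).restrict (Ioi 0)) := by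
    rw [hvol, Measure.prod_restrict]
  have hintU : Integrable ω (((volume : Measure ℝ).restrict univ).prod
      ((volume : Measure ℝ).restrict (Ioi 0))) := by
    rw [← hrestr, ← hUH]; exact hint
  -- Fubini for the whole upper half plane
  have hFub : (∫ y in upperHalf, ω y) = ∫ t, m t := by
    rw [hUH]
    calc (∫ y in (univ : Set ℝ) ×ˢ Ioi (0:ℝ), ω y)
        = ∫ y, ω y ∂(((volume : Measure ℝ).restrict univ).prod
            ((volume : Measure ℝ).restrict (Ioi 0))) := by rw [← hrestr]
      _ = ∫ t, (∫ s, ω (t, s) ∂((volume : Measure ℝ).restrict (Ioi 0)))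
            ∂((volume : Measure ℝ).restrict univ) := integral_prod _ hintU
      _ = ∫ t, m t := by rw [Measure.restrict_univ]
  -- integrability of m
  have hmInt : Integrable m := by
    have := hintU.integral_prod_left
    rwa [Measure.restrict_univ] at this
  -- Fubini for the slab
  have hslabInt : IntegrableOn ω ({y : ℝ × ℝ | 0 < y.2 ∧ |x₁ - y.1| < x₁ / A}) :=
    hint.mono_set hslabsub
  have hrestr2 : (volume : Measure (ℝ × ℝ)).restrict (Ioo a b ×ˢ Ioi (0:ℝ))
      = ((volume : Measure ℝ).restrict (Ioo a b)).prod ((volume : Measure ℝ).restrict (Ioi 0)) := by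
    rw [hvol, Measure.prod_restrict]
  have hintS : Integrable ω (((volume : Measure ℝ).restrict (Ioo a b)).prod
      ((volume : Measure ℝ).restrict (Ioi 0))) := by
    rw [← hrestr2, ← hslab]; exact hslabInt
  have hFubS : (∫ y in {y : ℝ × ℝ | 0 < y.2 ∧ |x₁ - y.1| < x₁ / A}, ω y)
      = ∫ t in Ioo a b, m t := by
    rw [hslab]
    calc (∫ y in Ioo a b ×ˢ Ioi (0:ℝ), ω y)
        = ∫ y, ω y ∂(((volume : Measure ℝ).restrict (Ioo a b)).prod
            ((volume : Measure ℝ).restrict (Ioi 0))) := by rw [← hrestr2]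
      _ = ∫ t in Ioo a b, m t := integral_prod _ hintS
  -- bound the slab integral by (b-a) * m a
  have hmono' : ∀ t ∈ Ioo a b, m t ≤ m a := fun t ht =>
    hmono hapos.le (le_trans hapos.le ht.1.le) ht.1.le
  have hstep1 : (∫ t in Ioo a b, m t) ≤ (b - a) * m a := by
    have h1 : (∫ t in Ioo a b, m t) ≤ ∫ t in Ioo a b, m a := by
      apply setIntegral_mono_on hmInt.integrableOn (integrableOn_const (by
        rw [Real.volume_Ioo]; exact ENNReal.ofReal_ne_top)) measurableSet_Ioo hmono'
    have h2 : (∫ t in Ioo a b, (m a : ℝ)) = (b - a) * m a := by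
      rw [setIntegral_const, Real.volume_real_Ioo_of_le (by rw [ha, hb]; linarith [div_pos hx₁ hApos]),
        smul_eq_mul]
    linarith
  -- Chebyshev: a * m a ≤ ∫ m
  have hcheb : a * m a ≤ ∫ t, m t := by
    have h1 : a * m a = ∫ t in Ioc (0:ℝ) a, (m a : ℝ) := by
      rw [setIntegral_const, Real.volume_real_Ioc_of_le hapos.le,
        smul_eq_mul, sub_zero]
    have h2 : (∫ t in Ioc (0:ℝ) a, (m a : ℝ)) ≤ ∫ t in Ioc (0:ℝ) a, m t := by
      apply setIntegral_mono_on (integrableOn_const (by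
        rw [Real.volume_Ioc]; exact ENNReal.ofReal_ne_top)) hmInt.integrableOn
        measurableSet_Ioc
      intro t ht
      exact hmono (le_of_lt ht.1) (by simpa using hapos.le) ht.2
    have h3 : (∫ t in Ioc (0:ℝ) a, m t) ≤ ∫ t, m t :=
      setIntegral_le_integral hmInt (Filter.Eventually.of_forall hm0)
    linarith
  -- combine
  set M := ∫ t, m t with hM
  have hkey : x₁ * m a ≤ 2 * M := by nlinarith [hm0 a]
  have hba : b - a = 2 * x₁ / A := by simp [ha, hb]; ring
  rw [hFubS, hFub]
  calc (∫ t in Ioo a b, m t) ≤ (b - a) * m a := hstep1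
    _ = (2 / A) * (x₁ * m a) := by rw [hba]; ring
    _ ≤ (2 / A) * (2 * M) := by
        apply mul_le_mul_of_nonneg_left hkey (by positivity)
    _ = 4 / A * M := by ring
end

section
/- Let g : ℝ → [0, ∞) be integrable, even, and non-increasing on [0, ∞), and let c > 0. Define h(x) := ∫_ℝ g(y) · c / ((y − x)² + c²) dy. Then h is even (h(x) = h(−x) for all x) and h is non-increasing on [0, ∞); in particular h attains its maximum at x = 0. -/
open MeasureTheory Set

-- auxiliary: even + antitone on [0,∞) gives comparison via squares
lemma aux_even_antitone (g : ℝ → ℝ) (hge : ∀ y, g (-y) = g y)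
    (hgm : AntitoneOn g (Ici 0)) {u v : ℝ} (h : u ^ 2 ≤ v ^ 2) : g v ≤ g u := by
  have habs : ∀ w : ℝ, g |w| = g w := by
    intro w
    rcases abs_cases w with ⟨h1, _⟩ | ⟨h1, _⟩
    · rw [h1]
    · rw [h1, hge]
  have huv : |u| ≤ |v| := by
    nlinarith [sq_abs u, sq_abs v, abs_nonneg u, abs_nonneg v]
  calc g v = g |v| := (habs v).symm
    _ ≤ g |u| := hgm (abs_nonneg u) (abs_nonneg v) huv
    _ = g u := habs u

-- the pointwise rearrangement inequality
lemma aux_pointwise (g : ℝ → ℝ) (hge : ∀ y, g (-y) = g y)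
    (hgm : AntitoneOn g (Ici 0)) (c : ℝ) (hc : 0 < c)
    {a b : ℝ} (ha : 0 ≤ a) (hab : a ≤ b) (y : ℝ) :
    g y * (c / ((y - b) ^ 2 + c ^ 2)) + g (a + b - y) * (c / ((y - a) ^ 2 + c ^ 2)) ≤
      g y * (c / ((y - a) ^ 2 + c ^ 2)) + g (a + b - y) * (c / ((y - b) ^ 2 + c ^ 2)) := by
  have hda : 0 < (y - a) ^ 2 + c ^ 2 := by positivity
  have hdb : 0 < (y - b) ^ 2 + c ^ 2 := by positivity
  rcases le_or_gt (a + b) (2 * y) with hy | hy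
  · -- y ≥ midpoint : k y b ≥ k y a, g y ≤ g (a+b-y)
    have hk : c / ((y - a) ^ 2 + c ^ 2) ≤ c / ((y - b) ^ 2 + c ^ 2) := by
      apply div_le_div_of_nonneg_left hc.le hdb
      nlinarith
    have hgy : g y ≤ g (a + b - y) :=
      aux_even_antitone g hge hgm (by nlinarith)
    nlinarith [mul_nonneg (sub_nonneg.2 hgy) (sub_nonneg.2 hk)]
  · have hk : c / ((y - b) ^ 2 + c ^ 2) ≤ c / ((y - a) ^ 2 + c ^ 2) := by
      apply div_le_div_of_nonneg_left hc.le hda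
      nlinarith
    have hgy : g (a + b - y) ≤ g y :=
      aux_even_antitone g hge hgm (by nlinarith)
    nlinarith [mul_nonneg (sub_nonneg.2 hgy) (sub_nonneg.2 hk)]

theorem poisson_convolution_symmetric_decreasing (g : ℝ → ℝ) (hg0 : ∀ y, 0 ≤ g y)
    (hgi : Integrable g) (hge : ∀ y, g (-y) = g y) (hgm : AntitoneOn g (Ici 0))
    (c : ℝ) (hc : 0 < c) :
    (∀ x : ℝ, (∫ y, g y * (c / ((y - x)^2 + c^2))) =
      ∫ y, g y * (c / ((y - (-x))^2 + c^2))) ∧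
    AntitoneOn (fun x : ℝ => ∫ y, g y * (c / ((y - x)^2 + c^2))) (Ici 0) ∧
    (∀ x : ℝ, (∫ y, g y * (c / ((y - x)^2 + c^2))) ≤
      ∫ y, g y * (c / ((y - 0)^2 + c^2))) := by
  have hkb : ∀ x y : ℝ, ‖c / ((y - x) ^ 2 + c ^ 2)‖ ≤ 1 / c := by
    intro x y
    rw [Real.norm_eq_abs, abs_of_nonneg (by positivity)]
    rw [div_le_div_iff₀ (by positivity) hc]
    nlinarith [sq_nonneg (y - x)]
  have hkm : ∀ x : ℝ, AEStronglyMeasurable (fun y => c / ((y - x) ^ 2 + c ^ 2)) volume := by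
    intro x
    apply Continuous.aestronglyMeasurable
    apply continuous_const.div (by continuity)
    intro y; positivity
  -- integrability of the main integrand
  have hint : ∀ (G : ℝ → ℝ), Integrable G → ∀ x : ℝ,
      Integrable (fun y => G y * (c / ((y - x) ^ 2 + c ^ 2))) := by
    intro G hG x
    have := hG.bdd_mul (c := 1 / c) (hkm x) (Filter.Eventually.of_forall fun y => hkb x y)
    simpa [mul_comm] using this
  -- evenness
  have heven : ∀ x : ℝ, (∫ y, g y * (c / ((y - x)^2 + c^2))) =
      ∫ y, g y * (c / ((y - (-x))^2 + c^2)) := by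
    intro x
    have := integral_neg_eq_self (fun y => g y * (c / ((y - (-x)) ^ 2 + c ^ 2))) volume
    rw [← this]
    congr 1
    ext y
    rw [hge y]
    ring_nf
  -- antitonicity
  have hanti : AntitoneOn (fun x : ℝ => ∫ y, g y * (c / ((y - x)^2 + c^2))) (Ici 0) := by
    intro a ha b hb hab
    simp only
    have hgm' : Integrable fun y => g (a + b - y) := hgi.comp_sub_left (a + b)
    -- reflected representations
    have hrb : (∫ y, g y * (c / ((y - b) ^ 2 + c ^ 2))) =
        ∫ y, g (a + b - y) * (c / ((y - a) ^ 2 + c ^ 2)) := by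
      rw [← integral_sub_left_eq_self (fun y => g y * (c / ((y - b) ^ 2 + c ^ 2))) volume (a + b)]
      congr 1; ext y; ring_nf
    have hra : (∫ y, g y * (c / ((y - a) ^ 2 + c ^ 2))) =
        ∫ y, g (a + b - y) * (c / ((y - b) ^ 2 + c ^ 2)) := by
      rw [← integral_sub_left_eq_self (fun y => g y * (c / ((y - a) ^ 2 + c ^ 2))) volume (a + b)]
      congr 1; ext y; ring_nf
    have key : (∫ y, g y * (c / ((y - b) ^ 2 + c ^ 2))) +
        ∫ y, g (a + b - y) * (c / ((y - a) ^ 2 + c ^ 2)) ≤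
        (∫ y, g y * (c / ((y - a) ^ 2 + c ^ 2))) +
        ∫ y, g (a + b - y) * (c / ((y - b) ^ 2 + c ^ 2)) := by
      rw [← integral_add (hint g hgi b) (hint _ hgm' a),
        ← integral_add (hint g hgi a) (hint _ hgm' b)]
      apply integral_mono ((hint g hgi b).add (hint _ hgm' a))
        ((hint g hgi a).add (hint _ hgm' b))
      intro y
      exact aux_pointwise g hge hgm c hc ha hab y
    rw [hrb] at key ⊢
    rw [hra] at key
    linarith
  refine ⟨heven, hanti, fun x => ?_⟩
  rcases le_or_gt 0 x with hx | hx
  · simpa using hanti (le_refl (0:ℝ)) hx hx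
  · rw [heven x]
    have := hanti (le_refl (0:ℝ)) (by linarith : (0:ℝ) ≤ -x) (by linarith)
    simpa using this
end
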